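/- Let C be a monoidal category acting on itself by the tensor product. The optic composition formula sending representatives (m, α, β) of Optic((x,u),(y,v)) and (n, α', β') of Optic((y,v),(z,w)) to the representative (m ⊗ n, α ≫ (𝟙 m ⊗ α') ≫ (α_{m,n,z}).inv, (α_{m,n,w}).hom ≫ (𝟙 m ⊗ β') ≫ β) descends to a well-defined map on the coend quotients (independent of the choice of representatives in both arguments); this composition is associative, and the classes ⟨(λ_x).inv, (λ_u).hom | 𝟙⟩ are two-sided identities for it. Hence pairs of objects of C with hom-sets Optic((x,u),(y,v)) form a category. -/

import Mathlib

open CategoryTheory MonoidalCategory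

variable {C : Type*} [Category C] [MonoidalCategory C]

/-- Representatives of optics (for the canonical self-action of a monoidal category). -/
def OpticRep (x u y v : C) : Type _ :=
  Σ m : C, (x ⟶ m ⊗ y) × (m ⊗ v ⟶ u)

/-- The coend relation: for `f : n ⟶ m`, `α : x ⟶ n ⊗ y`, `β : m ⊗ v ⟶ u`,
`(m, α ≫ (f ⊗ 𝟙 y), β)` is related to `(n, α, (f ⊗ 𝟙 v) ≫ β)`. -/
def OpticRel (x u y v : C) : OpticRep x u y v → OpticRep x u y v → Prop :=
  fun A B => ∃ f : B.1 ⟶ A.1,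
    A.2.1 = B.2.1 ≫ (f ⊗ₘ 𝟙 y) ∧ B.2.2 = (f ⊗ₘ 𝟙 v) ≫ A.2.2

/-- The optic coend `Optic((x,u),(y,v))`. -/
def Optic (x u y v : C) : Type _ := Quot (OpticRel x u y v)

def OpticCompRep {x u y v z w : C} (A : OpticRep x u y v) (B : OpticRep y v z w) :
    OpticRep x u z w :=
  ⟨A.1 ⊗ B.1, A.2.1 ≫ (𝟙 A.1 ⊗ₘ B.2.1) ≫ (α_ A.1 B.1 z).inv,
    (α_ A.1 B.1 w).hom ≫ (𝟙 A.1 ⊗ₘ B.2.2) ≫ A.2.2⟩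

theorem opticCompRep_left {x u y v z w : C} {A B : OpticRep x u y v}
    (h : OpticRel x u y v A B) (R : OpticRep y v z w) :
    OpticRel x u z w (OpticCompRep A R) (OpticCompRep B R) := by
  obtain ⟨f, h1, h2⟩ := h
  refine ⟨f ⊗ₘ 𝟙 R.1, ?_, ?_⟩
  · simp only [OpticCompRep, h1, Category.assoc, tensorHom_id, id_tensorHom]
    rw [← associator_inv_naturality_left, ← whisker_exchange_assoc]
  · simp only [OpticCompRep, h2, Category.assoc, tensorHom_id, id_tensorHom]
    rw [associator_naturality_left_assoc, whisker_exchange_assoc]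

theorem opticCompRep_right {x u y v z w : C} (L : OpticRep x u y v) {A B : OpticRep y v z w}
    (h : OpticRel y v z w A B) :
    OpticRel x u z w (OpticCompRep L A) (OpticCompRep L B) := by
  obtain ⟨f, h1, h2⟩ := h
  refine ⟨𝟙 L.1 ⊗ₘ f, ?_, ?_⟩
  · simp only [OpticCompRep, h1, Category.assoc, tensorHom_id, id_tensorHom]
    rw [← associator_inv_naturality_middle]
    simp [MonoidalCategory.whiskerLeft_comp]
  · simp only [OpticCompRep, h2, Category.assoc, tensorHom_id, id_tensorHom]
    rw [associator_naturality_middle_assoc]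
    simp [MonoidalCategory.whiskerLeft_comp]

def OpticComp (x u y v z w : C) : Optic x u y v → Optic y v z w → Optic x u z w :=
  Quot.lift
    (fun A => Quot.lift (fun B => Quot.mk (OpticRel x u z w) (OpticCompRep A B))
      (fun B B' h => Quot.sound (opticCompRep_right A h)))
    (fun A A' h => by
      funext l
      induction l using Quot.ind with
      | _ B => exact Quot.sound (opticCompRep_left h B))

theorem optic_id_comp (x u y v : C) (l : Optic x u y v) :
    OpticComp x u x u y v (Quot.mk (OpticRel x u x u) ⟨𝟙_ C, (λ_ x).inv, (λ_ u).hom⟩) l = l := by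
  induction l using Quot.ind with
  | _ A =>
    refine Quot.sound ⟨(λ_ A.1).inv, ?_, ?_⟩
    · simp [OpticCompRep]
    · simp [OpticCompRep]

theorem optic_comp_id (x u y v : C) (l : Optic x u y v) :
    OpticComp x u y v y v l (Quot.mk (OpticRel y v y v) ⟨𝟙_ C, (λ_ y).inv, (λ_ v).hom⟩) = l := by
  induction l using Quot.ind with
  | _ A =>
    refine Quot.sound ⟨(ρ_ A.1).inv, ?_, ?_⟩
    · simp [OpticCompRep]
    · simp [OpticCompRep]

theorem optic_assoc (x u y v z w p q : C)
    (l₁ : Optic x u y v) (l₂ : Optic y v z w) (l₃ : Optic z w p q) :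
    OpticComp x u y v p q l₁ (OpticComp y v z w p q l₂ l₃) =
      OpticComp x u z w p q (OpticComp x u y v z w l₁ l₂) l₃ := by
  induction l₁ using Quot.ind with | _ A =>
  induction l₂ using Quot.ind with | _ B =>
  induction l₃ using Quot.ind with | _ D =>
  refine Quot.sound ⟨(α_ A.1 B.1 D.1).hom, ?_, ?_⟩
  · simp [OpticCompRep]
  · simp [OpticCompRep]

theorem optic_category (C : Type*) [Category C] [MonoidalCategory C] :
    ∃ comp : ∀ (x u y v z w : C), Optic x u y v → Optic y v z w → Optic x u z w,
      (∀ (x u y v z w : C) (m : C) (α : x ⟶ m ⊗ y) (β : m ⊗ v ⟶ u)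
          (n : C) (α' : y ⟶ n ⊗ z) (β' : n ⊗ w ⟶ v),
        comp x u y v z w (Quot.mk (OpticRel x u y v) ⟨m, α, β⟩)
            (Quot.mk (OpticRel y v z w) ⟨n, α', β'⟩) =
          Quot.mk (OpticRel x u z w)
            ⟨m ⊗ n, α ≫ (𝟙 m ⊗ₘ α') ≫ (α_ m n z).inv,
              (α_ m n w).hom ≫ (𝟙 m ⊗ₘ β') ≫ β⟩) ∧
      (∀ (x u y v : C) (l : Optic x u y v),
        comp x u x u y v (Quot.mk (OpticRel x u x u) ⟨𝟙_ C, (λ_ x).inv, (λ_ u).hom⟩) l = l) ∧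
      (∀ (x u y v : C) (l : Optic x u y v),
        comp x u y v y v l (Quot.mk (OpticRel y v y v) ⟨𝟙_ C, (λ_ y).inv, (λ_ v).hom⟩) = l) ∧
      (∀ (x u y v z w p q : C)
          (l₁ : Optic x u y v) (l₂ : Optic y v z w) (l₃ : Optic z w p q),
        comp x u y v p q l₁ (comp y v z w p q l₂ l₃) =
          comp x u z w p q (comp x u y v z w l₁ l₂) l₃) :=
  ⟨OpticComp, fun _ _ _ _ _ _ _ _ _ _ _ _ => rfl, optic_id_comp, optic_comp_id, optic_assoc⟩
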